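/- Let n ≥ 2 be an integer and let k ∈ {1, 2, …, n−1}. For the function f(x) = (log x)^2 on (0,∞), whose derivative is f'(x) = 2·log(x)/x, one has (−1)^{n+k}·(x^k f'(x))^{(n−1)} ≤ 0 for all x > 0; that is, (−1)^{n+k} times the (n−1)-st derivative of the map x ↦ 2·x^{k−1}·log x is ≤ 0 on (0, ∞). -/

import Mathlib

open Filter Real

private lemma lemA (p m : ℕ) (hm : m ≤ p) :
    ∃ a b : ℝ, 0 < a ∧ ∀ x : ℝ, 0 < x →
      iteratedDeriv m (fun y : ℝ => 2 * y ^ p * Real.log y) x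
        = a * x ^ (p - m) * Real.log x + b * x ^ (p - m) := by
  induction m with
  | zero =>
    exact ⟨2, 0, two_pos, fun x hx => by simp [iteratedDeriv_zero]⟩
  | succ m ih =>
    obtain ⟨a, b, ha, hf⟩ := ih (le_of_lt (Nat.lt_of_succ_le hm))
    set q := p - m with hqdef
    have hq1 : 1 ≤ q := Nat.le_sub_of_add_le (by omega)
    obtain ⟨r, hr⟩ : ∃ r, q = r + 1 := ⟨q - 1, by omega⟩
    have hpr : p - (m + 1) = r := by omega
    refine ⟨a * q, a + b * q, by positivity, fun x hx => ?_⟩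
    have hxne : x ≠ 0 := ne_of_gt hx
    rw [iteratedDeriv_succ]
    have hev : iteratedDeriv m (fun y : ℝ => 2 * y ^ p * Real.log y)
        =ᶠ[nhds x] (fun y => a * y ^ q * Real.log y + b * y ^ q) :=
      Filter.eventuallyEq_of_mem (Ioi_mem_nhds hx) (fun y hy => hf y hy)
    rw [hev.deriv_eq]
    have hpow : HasDerivAt (fun y : ℝ => y ^ q) ((q : ℝ) * x ^ (q - 1)) x :=
      hasDerivAt_pow q x
    have h1 : HasDerivAt (fun y : ℝ => a * y ^ q * Real.log y)
        ((a * ((q : ℝ) * x ^ (q - 1))) * Real.log x + (a * x ^ q) * x⁻¹) x :=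
      (hpow.const_mul a).mul (Real.hasDerivAt_log hxne)
    have h2 : HasDerivAt (fun y : ℝ => b * y ^ q) (b * ((q : ℝ) * x ^ (q - 1))) x :=
      hpow.const_mul b
    rw [HasDerivAt.deriv (f := fun y : ℝ => a * y ^ q * Real.log y + b * y ^ q) (h1.add h2), hpr]
    have hq1' : q - 1 = r := by omega
    rw [hq1', hr]
    push_cast
    field_simp
    ring

private lemma lemB (p j : ℕ) (hj : 1 ≤ j) :
    ∃ b : ℝ, 0 < (-1 : ℝ) ^ (j - 1) * b ∧ ∀ x : ℝ, 0 < x →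
      iteratedDeriv (p + j) (fun y : ℝ => 2 * y ^ p * Real.log y) x
        = b * (x ^ j)⁻¹ := by
  induction j with
  | zero => omega
  | succ j ih =>
    rcases Nat.eq_zero_or_pos j with hj0 | hjpos
    · subst hj0
      obtain ⟨a, b, ha, hf⟩ := lemA p p le_rfl
      refine ⟨a, by simpa using ha, fun x hx => ?_⟩
      rw [iteratedDeriv_succ]
      have hev : iteratedDeriv p (fun y : ℝ => 2 * y ^ p * Real.log y)
          =ᶠ[nhds x] (fun y => a * Real.log y + b) :=
        Filter.eventuallyEq_of_mem (Ioi_mem_nhds hx)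
          (fun y hy => by simpa using hf y hy)
      rw [hev.deriv_eq]
      have h1 : HasDerivAt (fun y : ℝ => a * Real.log y + b) (a * x⁻¹) x :=
        ((Real.hasDerivAt_log (ne_of_gt hx)).const_mul a).add_const b
      rw [h1.deriv]
      simp
    · obtain ⟨b, hb, hf⟩ := ih hjpos
      refine ⟨-(j : ℝ) * b, ?_, fun x hx => ?_⟩
      · have : (-1 : ℝ) ^ (j + 1 - 1) * (-(j : ℝ) * b)
            = (j : ℝ) * ((-1 : ℝ) ^ (j - 1) * b) := by
          obtain ⟨i, rfl⟩ : ∃ i, j = i + 1 := ⟨j - 1, by omega⟩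
          simp [pow_succ]
          ring
        rw [this]
        positivity
      · have hxne : x ≠ 0 := ne_of_gt hx
        rw [show p + (j + 1) = (p + j) + 1 by ring, iteratedDeriv_succ]
        have hev : iteratedDeriv (p + j) (fun y : ℝ => 2 * y ^ p * Real.log y)
            =ᶠ[nhds x] (fun y => b * (y ^ j)⁻¹) :=
          Filter.eventuallyEq_of_mem (Ioi_mem_nhds hx) (fun y hy => hf y hy)
        rw [hev.deriv_eq]
        have hpow : HasDerivAt (fun y : ℝ => (y ^ j)⁻¹)
            (-((j : ℝ) * x ^ (j - 1)) / (x ^ j) ^ 2) x :=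
          (hasDerivAt_pow j x).inv (pow_ne_zero j hxne)
        have h1 := hpow.const_mul b
        rw [h1.deriv]
        obtain ⟨i, rfl⟩ : ∃ i, j = i + 1 := ⟨j - 1, by omega⟩
        simp only [Nat.add_sub_cancel]
        field_simp
        ring

theorem log_sq_differential_inequality
    (n k : ℕ) (hn : 2 ≤ n) (hk : k ∈ Finset.Icc 1 (n - 1)) :
    ∀ x : ℝ, 0 < x →
      (-1 : ℝ) ^ (n + k) *
        iteratedDeriv (n - 1) (fun y : ℝ => 2 * y ^ (k - 1) * Real.log y) x ≤ 0 := by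
  simp only [Finset.mem_Icc] at hk
  obtain ⟨hk1, hk2⟩ := hk
  set j := n - k with hjdef
  have hj1 : 1 ≤ j := by omega
  have hsum : n - 1 = (k - 1) + j := by omega
  obtain ⟨b, hb, hf⟩ := lemB (k - 1) j hj1
  intro x hx
  rw [hsum, hf x hx]
  have hsign : (-1 : ℝ) ^ (n + k) = (-1 : ℝ) ^ j := by
    have : n + k = j + 2 * k := by omega
    rw [this, pow_add, pow_mul]
    simp
  rw [hsign]
  have hneg : (-1 : ℝ) ^ j * b < 0 := by
    obtain ⟨i, hji⟩ : ∃ i, j = i + 1 := ⟨j - 1, by omega⟩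
    rw [hji] at hb ⊢
    simp only [Nat.add_sub_cancel] at hb
    rw [pow_succ]
    nlinarith
  have hpos : (0 : ℝ) < (x ^ j)⁻¹ := by positivity
  nlinarith
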